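/- Let G be a finite abelian group and S a subgroup of G. For every δ > 0 there exists ε > 0 such that for every finite output alphabet Y and every channel (G, Y, W): if Z_d(W) > 1 − ε for all d ∈ S and Z_d(W) < ε for all d ∈ G \ S, then | I⁰(W) − log₂(|G|/|S|) | < δ. -/

import Mathlib

open Finset

/-- Bhattacharyya distance between two input symbols. -/
noncomputable def Zpair {G Y : Type} [Fintype Y] (W : G → Y → ℝ) (x x' : G) : ℝ :=
  ∑ y : Y, Real.sqrt (W x y * W x' y)

/-- `Z_d(W) = (1/q)·Σ_{x∈G} Z(W_{x,x+d})`. -/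
noncomputable def Zd {G Y : Type} [Fintype G] [Fintype Y] [Add G]
    (W : G → Y → ℝ) (d : G) : ℝ :=
  (1 / (Fintype.card G : ℝ)) * ∑ x : G, Zpair W x (x + d)

/-- The symmetric capacity `I⁰(W)` of a channel `W` with uniform input. -/
noncomputable def symCap {X Y : Type} [Fintype X] [Fintype Y] (W : X → Y → ℝ) : ℝ :=
  ∑ x, ∑ y, (1 / (Fintype.card X : ℝ)) * W x y *
    Real.logb 2 (W x y / ((1 / (Fintype.card X : ℝ)) * ∑ x' : X, W x' y))

section aux
variable {α : Type*}

/-- Cauchy–Schwarz: `∑ √(f g) ≤ √(∑ f) √(∑ g)`. -/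
lemma sum_sqrt_mul_le (s : Finset α) (f g : α → ℝ)
    (hf : ∀ i ∈ s, 0 ≤ f i) (hg : ∀ i ∈ s, 0 ≤ g i) :
    ∑ i ∈ s, Real.sqrt (f i * g i) ≤ Real.sqrt (∑ i ∈ s, f i) * Real.sqrt (∑ i ∈ s, g i) := by
  have h := Finset.sum_sq_le_sum_mul_sum_of_sq_eq_mul s hf hg
    (fun i hi => Real.sq_sqrt (mul_nonneg (hf i hi) (hg i hi)))
  have h0 : 0 ≤ ∑ i ∈ s, Real.sqrt (f i * g i) :=
    Finset.sum_nonneg fun i _ => Real.sqrt_nonneg _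
  calc ∑ i ∈ s, Real.sqrt (f i * g i)
      = Real.sqrt ((∑ i ∈ s, Real.sqrt (f i * g i))^2) := (Real.sqrt_sq h0).symm
    _ ≤ Real.sqrt ((∑ i ∈ s, f i) * (∑ i ∈ s, g i)) := Real.sqrt_le_sqrt h
    _ = _ := Real.sqrt_mul (Finset.sum_nonneg hf) _

lemma sqrt_add_le' (a b : ℝ) (ha : 0 ≤ a) (hb : 0 ≤ b) :
    Real.sqrt (a + b) ≤ Real.sqrt a + Real.sqrt b := by
  have h : a + b ≤ (Real.sqrt a + Real.sqrt b)^2 := by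
    have ha' := Real.sq_sqrt ha
    have hb' := Real.sq_sqrt hb
    nlinarith [mul_nonneg (Real.sqrt_nonneg a) (Real.sqrt_nonneg b)]
  calc Real.sqrt (a + b) ≤ Real.sqrt ((Real.sqrt a + Real.sqrt b)^2) := Real.sqrt_le_sqrt h
    _ = _ := Real.sqrt_sq (by positivity)

/-- Jensen: `D(p‖q) ≥ -2 log₂ ∑ √(p q)` (Rényi-1/2 lower bound on KL). -/
lemma jensen_logb_lower [Fintype α] (p q : α → ℝ)
    (hp : ∀ y, 0 ≤ p y) (hq : ∀ y, 0 ≤ q y) (hp1 : ∑ y, p y = 1)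
    (hpq : ∀ y, p y ≠ 0 → 0 < q y) :
    -2 * Real.logb 2 (∑ y, Real.sqrt (p y * q y)) ≤
      ∑ y, p y * Real.logb 2 (p y / q y) := by
  classical
  set t : Finset α := Finset.univ.filter (fun y => p y ≠ 0) with ht
  have hpt : ∀ y ∈ t, 0 < p y := fun y hy =>
    (hp y).lt_of_ne (Ne.symm (Finset.mem_filter.mp hy).2)
  have hqt : ∀ y ∈ t, 0 < q y := fun y hy => hpq y (Finset.mem_filter.mp hy).2
  have hsum_t : ∑ y ∈ t, p y = 1 := by
    rw [ht, Finset.sum_filter_ne_zero]; exact hp1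
  -- Jensen with f = log, points √(q/p)
  have hjen := (strictConcaveOn_log_Ioi.concaveOn).le_map_sum
    (t := t) (w := p) (p := fun y => Real.sqrt (q y / p y))
    (fun y _ => hp y) hsum_t
    (fun y hy => Real.sqrt_pos.mpr (div_pos (hqt y hy) (hpt y hy)))
  have key : ∀ y ∈ t, p y • Real.sqrt (q y / p y) = Real.sqrt (p y * q y) := by
    intro y hy
    have hpy := hpt y hy
    rw [smul_eq_mul, ← Real.sqrt_sq hpy.le, ← Real.sqrt_mul (sq_nonneg _)]
    · congr 1; field_simp; rw [Real.sq_sqrt (sq_nonneg _)]; ring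
  have hpos_t : 0 < ∑ y ∈ t, Real.sqrt (p y * q y) := by
    have htne : t.Nonempty := by
      by_contra h
      rw [Finset.not_nonempty_iff_eq_empty] at h
      rw [h] at hsum_t; simp at hsum_t
    obtain ⟨y0, hy0⟩ := htne
    refine Finset.sum_pos' (fun y _ => Real.sqrt_nonneg _) ⟨y0, hy0, ?_⟩
    exact Real.sqrt_pos.mpr (mul_pos (hpt y0 hy0) (hqt y0 hy0))
  have hsub : ∑ y ∈ t, Real.sqrt (p y * q y) ≤ ∑ y, Real.sqrt (p y * q y) :=
    Finset.sum_le_sum_of_subset_of_nonneg (Finset.filter_subset _ _)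
      (fun y _ _ => Real.sqrt_nonneg _)
  -- rewrite both sides of hjen
  rw [Finset.sum_congr rfl key] at hjen
  have hlhs : ∀ y ∈ t, p y • Real.log (Real.sqrt (q y / p y))
      = -(1/2) * (p y * Real.log (p y / q y)) := by
    intro y hy
    have hpy := hpt y hy
    have hqy := hqt y hy
    rw [smul_eq_mul, Real.log_sqrt (by positivity), Real.log_div hqy.ne' hpy.ne',
      Real.log_div hpy.ne' hqy.ne']
    ring
  rw [Finset.sum_congr rfl hlhs] at hjen
  have hlog : -2 * Real.log (∑ y, Real.sqrt (p y * q y)) ≤ ∑ y, p y * Real.log (p y / q y) := by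
    have h1 : Real.log (∑ y ∈ t, Real.sqrt (p y * q y))
        ≤ Real.log (∑ y, Real.sqrt (p y * q y)) := Real.log_le_log hpos_t hsub
    have h2 : ∑ y, p y * Real.log (p y / q y) = ∑ y ∈ t, p y * Real.log (p y / q y) := by
      rw [ht]; rw [Finset.sum_filter_of_ne]
      intro y _ h
      exact fun hz => h (by rw [hz, zero_mul])
    rw [h2]
    have := hjen.trans h1
    have h3 : ∑ y ∈ t, -(1/2) * (p y * Real.log (p y / q y))
        = -(1/2) * ∑ y ∈ t, p y * Real.log (p y / q y) := by
      rw [Finset.mul_sum]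
    rw [h3] at this
    linarith
  -- convert to logb
  have hl2 : (0:ℝ) < Real.log 2 := Real.log_pos (by norm_num)
  have : ∑ y, p y * Real.logb 2 (p y / q y)
      = (∑ y, p y * Real.log (p y / q y)) / Real.log 2 := by
    rw [Finset.sum_div]
    exact Finset.sum_congr rfl fun y _ => by rw [Real.logb, mul_div_assoc]
  rw [this, Real.logb]
  rw [show -2 * (Real.log (∑ y, Real.sqrt (p y * q y)) / Real.log 2)
      = (-2 * Real.log (∑ y, Real.sqrt (p y * q y))) / Real.log 2 by ring]
  exact div_le_div_of_nonneg_right hlog hl2.le |>.trans_eq rfl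

end aux

/-- Le Cam: total variation is controlled by the Bhattacharyya affinity. -/
lemma tv_le_of_bhatt [Fintype α] (p a : α → ℝ)
    (hp : ∀ y, 0 ≤ p y) (ha : ∀ y, 0 ≤ a y) (hp1 : ∑ y, p y = 1) (ha1 : ∑ y, a y = 1) :
    ∑ y, |p y - a y| ≤ 2 * Real.sqrt (2 * (1 - ∑ y, Real.sqrt (p y * a y))) := by
  set Z := ∑ y, Real.sqrt (p y * a y) with hZ
  have hZ1 : Z ≤ 1 := by
    have := sum_sqrt_mul_le Finset.univ p a (fun y _ => hp y) (fun y _ => ha y)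
    rwa [hp1, ha1, Real.sqrt_one, one_mul] at this
  have hZ0 : 0 ≤ Z := Finset.sum_nonneg fun y _ => Real.sqrt_nonneg _
  have hcs := Finset.sum_sq_le_sum_mul_sum_of_sq_eq_mul Finset.univ
    (r := fun y => |p y - a y|)
    (f := fun y => (Real.sqrt (p y) - Real.sqrt (a y))^2)
    (g := fun y => (Real.sqrt (p y) + Real.sqrt (a y))^2)
    (fun y _ => sq_nonneg _) (fun y _ => sq_nonneg _)
    (by
      intro y _
      have hpy := Real.sq_sqrt (hp y)
      have hay := Real.sq_sqrt (ha y)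
      rw [sq_abs, ← mul_pow]
      congr 1
      linear_combination hay - hpy)
  have hf : ∑ y, (Real.sqrt (p y) - Real.sqrt (a y))^2 = 2 - 2*Z := by
    have : ∀ y, (Real.sqrt (p y) - Real.sqrt (a y))^2
        = p y + a y - 2 * Real.sqrt (p y * a y) := by
      intro y
      have hpy := Real.sq_sqrt (hp y)
      have hay := Real.sq_sqrt (ha y)
      rw [Real.sqrt_mul (hp y)]
      ring_nf
      nlinarith
    rw [Finset.sum_congr rfl (fun y _ => this y)]
    rw [hZ]
    simp [Finset.sum_add_distrib, Finset.sum_sub_distrib, hp1, ha1, Finset.mul_sum]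
    ring
  have hg : ∑ y, (Real.sqrt (p y) + Real.sqrt (a y))^2 = 2 + 2*Z := by
    have : ∀ y, (Real.sqrt (p y) + Real.sqrt (a y))^2
        = p y + a y + 2 * Real.sqrt (p y * a y) := by
      intro y
      have hpy := Real.sq_sqrt (hp y)
      have hay := Real.sq_sqrt (ha y)
      rw [Real.sqrt_mul (hp y)]
      ring_nf
      nlinarith
    rw [Finset.sum_congr rfl (fun y _ => this y)]
    rw [hZ]
    simp [Finset.sum_add_distrib, hp1, ha1, Finset.mul_sum]
    ring
  rw [hf, hg] at hcs
  have habs : 0 ≤ ∑ y, |p y - a y| := Finset.sum_nonneg fun y _ => abs_nonneg _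
  have hsq : (∑ y, |p y - a y|)^2 ≤ (2 * Real.sqrt (2 * (1 - Z)))^2 := by
    have h8 : (2 - 2*Z) * (2 + 2*Z) ≤ 8 * (1 - Z) := by nlinarith
    have : (2 * Real.sqrt (2 * (1 - Z)))^2 = 8 * (1 - Z) := by
      rw [mul_pow, Real.sq_sqrt (by linarith)]
      ring
    linarith
  calc ∑ y, |p y - a y| = Real.sqrt ((∑ y, |p y - a y|)^2) := (Real.sqrt_sq habs).symm
    _ ≤ Real.sqrt ((2 * Real.sqrt (2 * (1 - Z)))^2) := Real.sqrt_le_sqrt hsq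
    _ = _ := Real.sqrt_sq (by positivity)

/-- Per-point bound: `w log₂(w/a) ≤ (s / ln 2) |w - a|` when `w ≤ s a`. -/
lemma mul_logb_div_le {w a s : ℝ} (hw : 0 ≤ w) (ha : 0 ≤ a) (hs : 1 ≤ s)
    (hwa : w ≤ s * a) : w * Real.logb 2 (w / a) ≤ s / Real.log 2 * |w - a| := by
  have hl2 : (0:ℝ) < Real.log 2 := Real.log_pos (by norm_num)
  rcases hw.eq_or_lt with h0 | hw0
  · rw [← h0, zero_mul]; positivity
  · have ha0 : 0 < a := by
      rcases ha.eq_or_lt with h | h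
      · exfalso; rw [← h, mul_zero] at hwa; linarith
      · exact h
    rcases le_or_gt w a with hle | hlt
    · have : Real.logb 2 (w / a) ≤ 0 :=
        Real.logb_nonpos (by norm_num) (by positivity) (by
          rw [div_le_one ha0]; exact hle)
      have : w * Real.logb 2 (w / a) ≤ 0 := mul_nonpos_of_nonneg_of_nonpos hw0.le this
      have hrhs : 0 ≤ s / Real.log 2 * |w - a| := by positivity
      linarith
    · have hL : Real.log (w / a) ≤ w / a - 1 := Real.log_le_sub_one_of_pos (by positivity)
      have habs : |w - a| = w - a := abs_of_pos (by linarith)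
      rw [Real.logb, habs]
      rw [show w * (Real.log (w/a) / Real.log 2) = w * Real.log (w/a) / Real.log 2 by ring,
        show s / Real.log 2 * (w - a) = s * (w - a) / Real.log 2 by ring]
      apply div_le_div_of_nonneg_right _ hl2.le
      have h1 : w * Real.log (w/a) ≤ w * (w/a - 1) :=
        mul_le_mul_of_nonneg_left hL hw0.le
      have h2 : w * (w/a - 1) ≤ s * (w - a) := by
        rw [mul_comm, ← sub_nonneg]
        have : s * (w - a) - (w/a - 1) * w = (s * a - w) * (w - a) / a := by
          field_simp
        rw [this]
        exact div_nonneg (mul_nonneg (by linarith) (by linarith)) ha0.le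
      linarith

lemma sqrt_sum_le_sum_sqrt {α : Type*} (s : Finset α) (f : α → ℝ)
    (hf : ∀ i ∈ s, 0 ≤ f i) :
    Real.sqrt (∑ i ∈ s, f i) ≤ ∑ i ∈ s, Real.sqrt (f i) := by
  induction s using Finset.cons_induction with
  | empty => simp
  | cons a s ha ih =>
    rw [Finset.sum_cons, Finset.sum_cons]
    have h1 : 0 ≤ f a := hf a (Finset.mem_cons_self a s)
    have h2 : ∀ i ∈ s, 0 ≤ f i := fun i hi => hf i (Finset.mem_cons.mpr (Or.inr hi))
    exact (sqrt_add_le' _ _ h1 (Finset.sum_nonneg h2)).trans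
      (add_le_add le_rfl (ih h2))

set_option maxHeartbeats 2000000 in
/-- if `Z_d(W)` is close to `1` on a subgroup `S` and close to `0` off `S`,
then the symmetric capacity is close to `log₂(|G|/|S|)`. -/
theorem symCap_close_to_log_index
    {G : Type} [Fintype G] [AddCommGroup G] (S : AddSubgroup G)
    (δ : ℝ) (hδ : 0 < δ) :
    ∃ ε : ℝ, 0 < ε ∧
      ∀ (Y : Type) (_ : Fintype Y) (W : G → Y → ℝ),
        (∀ x y, 0 ≤ W x y) → (∀ x, ∑ y, W x y = 1) →
        (∀ d ∈ S, Zd W d > 1 - ε) →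
        (∀ d ∉ S, Zd W d < ε) →
        |symCap W - Real.logb 2 ((Fintype.card G : ℝ) / (Nat.card S : ℝ))| < δ := by
    classical
  have hl2 : (0:ℝ) < Real.log 2 := Real.log_pos (by norm_num)
  set qn := Fintype.card G with hqdef
  set sn := Nat.card S with hsdef
  have hq0 : 0 < qn := Fintype.card_pos
  have hs0 : 0 < sn := Nat.card_pos
  have hsq : sn ≤ qn := by
    rw [hsdef, hqdef, ← Nat.card_eq_fintype_card]
    exact Nat.card_le_card_of_injective _ Subtype.val_injective
  have hq0' : (0:ℝ) < qn := by exact_mod_cast hq0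
  have hs0' : (0:ℝ) < sn := by exact_mod_cast hs0
  have hsq' : (sn:ℝ) ≤ qn := by exact_mod_cast hsq
  obtain ⟨c, hcdef⟩ : ∃ c : ℝ, c = Real.sqrt ((sn:ℝ)/qn) := ⟨_, rfl⟩
  have hc0 : 0 < c := hcdef ▸ Real.sqrt_pos.mpr (div_pos hs0' hq0')
  have hrpow : (1:ℝ) < (2:ℝ) ^ (δ/2) :=
    (Real.one_lt_rpow_iff_of_pos (by norm_num)).mpr (Or.inl ⟨one_lt_two, by linarith⟩)
  obtain ⟨m₁, hm₁def⟩ : ∃ m : ℝ, m = (δ * Real.log 2)^2/(8*(sn:ℝ)^2) := ⟨_, rfl⟩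
  have hm₁0 : 0 < m₁ := by rw [hm₁def]; positivity
  have hsqrtq : (0:ℝ) < Real.sqrt qn := Real.sqrt_pos.mpr hq0'
  obtain ⟨m₂, hm₂def⟩ : ∃ m : ℝ, m = c * ((2:ℝ) ^ (δ/2) - 1)/Real.sqrt qn := ⟨_, rfl⟩
  have hm₂0 : 0 < m₂ := by rw [hm₂def]; exact div_pos (by nlinarith) hsqrtq
  obtain ⟨η, hηdef⟩ : ∃ e : ℝ, e = min m₁ m₂ / 2 := ⟨_, rfl⟩
  have hη0 : 0 < η := by rw [hηdef]; exact div_pos (lt_min hm₁0 hm₂0) two_pos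
  have hηm₁ : 2*η ≤ m₁ := by
    rw [hηdef]
    have := min_le_left m₁ m₂
    linarith
  have hηm₂ : η < m₂ := by
    rw [hηdef]
    have := min_le_right m₁ m₂
    linarith
  refine ⟨η/qn, div_pos hη0 hq0', ?_⟩
  intro Y instY W hW0 hW1 hZin hZout
  have hqε : (qn:ℝ)*(η/qn) = η := by field_simp
  -- basic Zpair facts
  have hZp0 : ∀ x x' : G, 0 ≤ Zpair W x x' := fun x x' =>
    Finset.sum_nonneg fun y _ => Real.sqrt_nonneg _
  have hZp1 : ∀ x x' : G, Zpair W x x' ≤ 1 := by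
    intro x x'
    have := sum_sqrt_mul_le Finset.univ (W x) (W x')
      (fun y _ => hW0 x y) (fun y _ => hW0 x' y)
    rwa [hW1, hW1, Real.sqrt_one, one_mul] at this
  have hZdsum : ∀ d : G, (∑ z : G, Zpair W z (z + d)) = qn * Zd W d := by
    intro d
    rw [Zd, ← hqdef]
    field_simp
  have hpair_out : ∀ x x' : G, x' - x ∉ S → Zpair W x x' ≤ η := by
    intro x x' hx
    have hd := hZout _ hx
    have hsum : ∑ z : G, Zpair W z (z + (x' - x)) < η := by
      rw [hZdsum]
      calc (qn:ℝ) * Zd W (x' - x) < qn * (η/qn) :=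
            (mul_lt_mul_iff_right₀ hq0').mpr hd
        _ = η := hqε
    have hx' : x + (x' - x) = x' := by abel
    have hle : Zpair W x (x + (x' - x)) ≤ ∑ z : G, Zpair W z (z + (x' - x)) :=
      Finset.single_le_sum (f := fun z => Zpair W z (z + (x' - x)))
        (fun z _ => hZp0 _ _) (Finset.mem_univ x)
    rw [hx'] at hle
    linarith
  have hpair_in : ∀ (x d : G), d ∈ S → 1 - η ≤ Zpair W x (x + d) := by
    intro x d hdS
    have hd := hZin d hdS
    have hsum : (qn:ℝ) * (1 - η/qn) < ∑ z : G, Zpair W z (z + d) := by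
      rw [hZdsum]
      exact (mul_lt_mul_iff_right₀ hq0').mpr hd
    have hsplit : ∑ z : G, Zpair W z (z + d)
        = Zpair W x (x + d) + ∑ z ∈ Finset.univ.erase x, Zpair W z (z + d) :=
      (Finset.add_sum_erase _ _ (Finset.mem_univ x)).symm
    have herase : ∑ z ∈ Finset.univ.erase x, Zpair W z (z + d) ≤ (qn:ℝ) - 1 := by
      have hcard : (Finset.univ.erase x).card = qn - 1 := by
        rw [Finset.card_erase_of_mem (Finset.mem_univ x), Finset.card_univ, hqdef]
      have := Finset.sum_le_card_nsmul (Finset.univ.erase x)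
        (fun z => Zpair W z (z + d)) 1 (fun z _ => hZp1 _ _)
      rw [hcard, nsmul_eq_mul, mul_one] at this
      calc ∑ z ∈ Finset.univ.erase x, Zpair W z (z + d) ≤ ((qn - 1 : ℕ) : ℝ) := this
        _ = (qn:ℝ) - 1 := by
            push_cast [Nat.cast_sub hq0]
            ring
    have hq' : (qn:ℝ) * (1 - η/qn) = qn - η := by field_simp
    rw [hq'] at hsum
    linarith
  -- coset cardinality
  have hCcard : ∀ x : G, (Finset.univ.filter (fun x' : G => x' - x ∈ S)).card = sn := by
    intro x
    rw [← Fintype.card_subtype, hsdef, ← Nat.card_eq_fintype_card]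
    exact Nat.card_congr ((Equiv.subRight x).subtypeEquiv (fun x' => Iff.rfl))
  -- the output distribution
  obtain ⟨Qf, hQfdef⟩ : ∃ Q : Y → ℝ, Q = fun y => 1/(qn:ℝ) * ∑ x' : G, W x' y := ⟨_, rfl⟩
  have hQf0 : ∀ y, 0 ≤ Qf y := fun y => by
    rw [hQfdef]
    exact mul_nonneg (by positivity) (Finset.sum_nonneg fun i _ => hW0 i y)
  have hQfW : ∀ (x : G) (y : Y), 1/(qn:ℝ) * W x y ≤ Qf y := by
    intro x y
    rw [hQfdef]
    exact mul_le_mul_of_nonneg_left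
      (Finset.single_le_sum (f := fun x' => W x' y) (fun i _ => hW0 i y) (Finset.mem_univ x))
      (by positivity)
  have hsymCap : symCap W = ∑ x : G, (1/(qn:ℝ)) * ∑ y, W x y * Real.logb 2 (W x y / Qf y) := by
    simp only [symCap, ← hqdef, hQfdef]
    refine Finset.sum_congr rfl fun x _ => ?_
    rw [Finset.mul_sum]
    exact Finset.sum_congr rfl fun y _ => by ring
  -- upper bound, per input
  have hUB : ∀ x : G, ∑ y, W x y * Real.logb 2 (W x y / Qf y)
      ≤ Real.logb 2 ((qn:ℝ)/sn) + (sn:ℝ)/Real.log 2 * (2 * Real.sqrt (2*η)) := by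
    intro x
    obtain ⟨C, hCdef⟩ : ∃ C : Finset G, C = Finset.univ.filter (fun x' : G => x' - x ∈ S) :=
      ⟨_, rfl⟩
    obtain ⟨A, hAdef⟩ : ∃ A : Y → ℝ, A = fun y => 1/(sn:ℝ) * ∑ x' ∈ C, W x' y := ⟨_, rfl⟩
    have hxC : x ∈ C := by
      rw [hCdef]
      simp only [Finset.mem_filter, Finset.mem_univ, true_and, sub_self]
      exact S.zero_mem
    have hCc : (C.card : ℝ) = sn := by rw [hCdef]; exact_mod_cast hCcard x
    have hA0 : ∀ y, 0 ≤ A y := by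
      intro y; rw [hAdef]
      exact mul_nonneg (by positivity) (Finset.sum_nonneg fun i _ => hW0 i y)
    have hsA : ∀ y, (sn:ℝ) * A y = ∑ x' ∈ C, W x' y := by
      intro y; rw [hAdef]; field_simp
    have hA1 : ∑ y, A y = 1 := by
      have h1 : (sn:ℝ) * ∑ y, A y = (sn:ℝ) * 1 := by
        rw [Finset.mul_sum, mul_one]
        calc ∑ y, (sn:ℝ) * A y = ∑ y, ∑ x' ∈ C, W x' y :=
              Finset.sum_congr rfl fun y _ => hsA y
          _ = ∑ x' ∈ C, ∑ y, W x' y := Finset.sum_comm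
          _ = ∑ _x' ∈ C, (1:ℝ) := Finset.sum_congr rfl fun x' _ => hW1 x'
          _ = (sn:ℝ) := by rw [Finset.sum_const, nsmul_eq_mul, mul_one, hCc]
      exact mul_left_cancel₀ hs0'.ne' h1
    have hWA : ∀ y, W x y ≤ (sn:ℝ) * A y := by
      intro y
      rw [hsA]
      exact Finset.single_le_sum (f := fun x' => W x' y) (fun i _ => hW0 i y) hxC
    have hbh : 1 - η ≤ ∑ y, Real.sqrt (W x y * A y) := by
      have hper : ∀ y : Y, (1/(sn:ℝ)) * ∑ x' ∈ C, Real.sqrt (W x y * W x' y)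
          ≤ Real.sqrt (W x y * A y) := by
        intro y
        have hcs := sum_sqrt_mul_le C (fun _ => W x y) (fun x' => W x' y)
          (fun i _ => hW0 x y) (fun i _ => hW0 i y)
        have h1 : ∑ _x' ∈ C, W x y = (sn:ℝ) * W x y := by
          rw [Finset.sum_const, nsmul_eq_mul, hCc]
        have h2 : Real.sqrt ((sn:ℝ) * W x y) * Real.sqrt ((sn:ℝ) * A y)
            = (sn:ℝ) * Real.sqrt (W x y * A y) := by
          rw [← Real.sqrt_mul (mul_nonneg hs0'.le (hW0 x y)),
            show (sn:ℝ) * W x y * ((sn:ℝ) * A y) = (sn:ℝ)^2 * (W x y * A y) by ring,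
            Real.sqrt_mul (by positivity), Real.sqrt_sq hs0'.le]
        rw [h1, ← hsA y, h2] at hcs
        calc (1/(sn:ℝ)) * ∑ x' ∈ C, Real.sqrt (W x y * W x' y)
            ≤ (1/(sn:ℝ)) * ((sn:ℝ) * Real.sqrt (W x y * A y)) :=
              mul_le_mul_of_nonneg_left hcs (by positivity)
          _ = Real.sqrt (W x y * A y) := by field_simp
      have hsum : (1/(sn:ℝ)) * ∑ x' ∈ C, Zpair W x x' ≤ ∑ y, Real.sqrt (W x y * A y) := by
        calc (1/(sn:ℝ)) * ∑ x' ∈ C, Zpair W x x'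
            = ∑ y, (1/(sn:ℝ)) * ∑ x' ∈ C, Real.sqrt (W x y * W x' y) := by
              rw [← Finset.mul_sum]
              congr 1
              unfold Zpair
              exact Finset.sum_comm
          _ ≤ _ := Finset.sum_le_sum fun y _ => hper y
      have hZlow : (sn:ℝ) * (1 - η) ≤ ∑ x' ∈ C, Zpair W x x' := by
        have hmem : ∀ x' ∈ C, 1 - η ≤ Zpair W x x' := by
          intro x' hx'
          have hmem' : x' - x ∈ S := by
            rw [hCdef] at hx'; simpa using hx'
          have h := hpair_in x (x' - x) hmem'
          rwa [show x + (x' - x) = x' by abel] at h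
        calc (sn:ℝ) * (1 - η) = ∑ _x' ∈ C, (1 - η) := by
              rw [Finset.sum_const, nsmul_eq_mul, hCc]
          _ ≤ _ := Finset.sum_le_sum hmem
      calc 1 - η = (1/(sn:ℝ)) * ((sn:ℝ) * (1 - η)) := by field_simp
        _ ≤ (1/(sn:ℝ)) * ∑ x' ∈ C, Zpair W x x' :=
            mul_le_mul_of_nonneg_left hZlow (by positivity)
        _ ≤ _ := hsum
    have htv : ∑ y, |W x y - A y| ≤ 2 * Real.sqrt (2*η) := by
      have h := tv_le_of_bhatt (W x) A (hW0 x) hA0 (hW1 x) hA1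
      refine h.trans ?_
      have h2 : 2 * (1 - ∑ y, Real.sqrt (W x y * A y)) ≤ 2*η := by linarith
      exact mul_le_mul_of_nonneg_left (Real.sqrt_le_sqrt h2) (by norm_num)
    have hy : ∀ y, W x y * Real.logb 2 (W x y / Qf y)
        ≤ W x y * Real.logb 2 ((qn:ℝ)/sn) + (sn:ℝ)/Real.log 2 * |W x y - A y| := by
      intro y
      rcases (hW0 x y).eq_or_lt with h0 | hpos
      · rw [← h0, zero_mul, zero_mul, zero_add]
        positivity
      · have hAy : 0 < A y := by nlinarith [hWA y]
        have hQin : (sn:ℝ)/qn * A y ≤ Qf y := by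
          have hsub : ∑ x' ∈ C, W x' y ≤ ∑ x' : G, W x' y :=
            Finset.sum_le_sum_of_subset_of_nonneg (hCdef ▸ Finset.filter_subset _ _)
              (fun i _ _ => hW0 i y)
          have he : (sn:ℝ)/qn * A y = 1/(qn:ℝ) * ∑ x' ∈ C, W x' y := by
            rw [← hsA]; ring
          rw [he, hQfdef]
          exact mul_le_mul_of_nonneg_left hsub (by positivity)
        have hsqA : 0 < (sn:ℝ)/qn * A y := mul_pos (div_pos hs0' hq0') hAy
        have hQfy : 0 < Qf y := lt_of_lt_of_le hsqA hQin
        have hstep1 : Real.logb 2 (W x y / Qf y)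
            ≤ Real.logb 2 ((qn:ℝ)/sn) + Real.logb 2 (W x y / A y) := by
          have hd1 : W x y / Qf y ≤ W x y / ((sn:ℝ)/qn * A y) :=
            div_le_div_of_nonneg_left hpos.le hsqA hQin
          have hsplit : W x y / ((sn:ℝ)/qn * A y) = (qn:ℝ)/sn * (W x y / A y) := by
            field_simp
          calc Real.logb 2 (W x y / Qf y)
              ≤ Real.logb 2 (W x y / ((sn:ℝ)/qn * A y)) :=
                Real.logb_le_logb_of_le (by norm_num) (div_pos hpos hQfy) hd1
            _ = _ := by
                rw [hsplit, Real.logb_mul (ne_of_gt (div_pos hq0' hs0'))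
                  (ne_of_gt (div_pos hpos hAy))]
        have hstep3 : W x y * Real.logb 2 (W x y / A y)
            ≤ (sn:ℝ)/Real.log 2 * |W x y - A y| :=
          mul_logb_div_le (hW0 x y) (hA0 y)
            (by exact_mod_cast hs0 : (1:ℝ) ≤ sn) (hWA y)
        calc W x y * Real.logb 2 (W x y / Qf y)
            ≤ W x y * (Real.logb 2 ((qn:ℝ)/sn) + Real.logb 2 (W x y / A y)) :=
              mul_le_mul_of_nonneg_left hstep1 hpos.le
          _ = W x y * Real.logb 2 ((qn:ℝ)/sn) + W x y * Real.logb 2 (W x y / A y) := by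
              ring
          _ ≤ _ := by linarith
    calc ∑ y, W x y * Real.logb 2 (W x y / Qf y)
        ≤ ∑ y, (W x y * Real.logb 2 ((qn:ℝ)/sn) + (sn:ℝ)/Real.log 2 * |W x y - A y|) :=
          Finset.sum_le_sum fun y _ => hy y
      _ = Real.logb 2 ((qn:ℝ)/sn) + (sn:ℝ)/Real.log 2 * ∑ y, |W x y - A y| := by
          rw [Finset.sum_add_distrib, ← Finset.sum_mul, hW1, ← Finset.mul_sum, one_mul]
      _ ≤ _ :=
          add_le_add le_rfl (mul_le_mul_of_nonneg_left htv (by positivity))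
  -- lower bound, per input
  have hLB : ∀ x : G, -2 * Real.logb 2 (c + Real.sqrt qn * η)
      ≤ ∑ y, W x y * Real.logb 2 (W x y / Qf y) := by
    intro x
    obtain ⟨C, hCdef⟩ : ∃ C : Finset G, C = Finset.univ.filter (fun x' : G => x' - x ∈ S) :=
      ⟨_, rfl⟩
    obtain ⟨Cc, hCcdef⟩ : ∃ Cc : Finset G,
        Cc = Finset.univ.filter (fun x' : G => ¬(x' - x ∈ S)) := ⟨_, rfl⟩
    have hCc : (C.card : ℝ) = sn := by rw [hCdef]; exact_mod_cast hCcard x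
    have hjen := jensen_logb_lower (W x) Qf (hW0 x) hQf0 (hW1 x)
      (fun y hy => lt_of_lt_of_le
        (mul_pos (by positivity) ((hW0 x y).lt_of_ne (Ne.symm hy))) (hQfW x y))
    refine le_trans ?_ hjen
    obtain ⟨u, hudef⟩ : ∃ u : Y → ℝ, u = fun y => 1/(qn:ℝ) * ∑ x' ∈ C, W x' y := ⟨_, rfl⟩
    obtain ⟨v, hvdef⟩ : ∃ v : Y → ℝ, v = fun y => 1/(qn:ℝ) * ∑ x' ∈ Cc, W x' y := ⟨_, rfl⟩
    have hu0 : ∀ y, 0 ≤ u y := by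
      intro y; rw [hudef]
      exact mul_nonneg (by positivity) (Finset.sum_nonneg fun i _ => hW0 i y)
    have hv0 : ∀ y, 0 ≤ v y := by
      intro y; rw [hvdef]
      exact mul_nonneg (by positivity) (Finset.sum_nonneg fun i _ => hW0 i y)
    have hQfsplit : ∀ y, Qf y = u y + v y := by
      intro y
      rw [hQfdef, hudef, hvdef, hCdef, hCcdef]
      simp only
      rw [← mul_add, Finset.sum_filter_add_sum_filter_not]
    have hu1 : ∑ y, u y = (sn:ℝ)/qn := by
      calc ∑ y, u y = ∑ y, ∑ x' ∈ C, 1/(qn:ℝ) * W x' y :=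
            Finset.sum_congr rfl fun y _ => by rw [hudef]; exact Finset.mul_sum _ _ _
        _ = ∑ x' ∈ C, ∑ y, 1/(qn:ℝ) * W x' y := Finset.sum_comm
        _ = ∑ x' ∈ C, 1/(qn:ℝ) * ∑ y, W x' y :=
            Finset.sum_congr rfl fun x' _ => (Finset.mul_sum _ _ _).symm
        _ = ∑ _x' ∈ C, 1/(qn:ℝ) * 1 :=
            Finset.sum_congr rfl fun x' _ => by rw [hW1]
        _ = (sn:ℝ)/qn := by
            rw [Finset.sum_const, nsmul_eq_mul, hCc]; ring
    have hTu : ∑ y, Real.sqrt (W x y * u y) ≤ c := by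
      have h := sum_sqrt_mul_le Finset.univ (W x) u (fun y _ => hW0 x y) (fun y _ => hu0 y)
      rwa [hW1, hu1, Real.sqrt_one, one_mul, ← hcdef] at h
    have hTv : ∑ y, Real.sqrt (W x y * v y) ≤ Real.sqrt qn * η := by
      have hpery : ∀ y, Real.sqrt (W x y * v y)
          ≤ ∑ x' ∈ Cc, Real.sqrt (1/(qn:ℝ)) * Real.sqrt (W x y * W x' y) := by
        intro y
        have he : W x y * v y = ∑ x' ∈ Cc, 1/(qn:ℝ) * (W x y * W x' y) := by
          rw [hvdef]
          simp only [Finset.mul_sum]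
          exact Finset.sum_congr rfl fun x' _ => by ring
        rw [he]
        refine (sqrt_sum_le_sum_sqrt Cc _ fun i _ => by
          have h1 := hW0 x y; have h2 := hW0 i y; positivity).trans ?_
        refine le_of_eq (Finset.sum_congr rfl fun x' _ => ?_)
        rw [Real.sqrt_mul (by positivity)]
      have hZsum : ∑ x' ∈ Cc, Zpair W x x' ≤ (qn:ℝ) * η := by
        have hle : ∀ x' ∈ Cc, Zpair W x x' ≤ η := by
          intro x' hx'
          apply hpair_out
          rw [hCcdef] at hx'
          simpa using hx'
        have h := Finset.sum_le_card_nsmul Cc (fun x' => Zpair W x x') η hle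
        rw [nsmul_eq_mul] at h
        refine h.trans ?_
        have hcard : (Cc.card : ℝ) ≤ qn := by
          rw [hqdef]
          exact_mod_cast Finset.card_le_univ Cc
        exact mul_le_mul_of_nonneg_right hcard hη0.le
      have hkey : Real.sqrt (1/(qn:ℝ)) * ((qn:ℝ)*η) = Real.sqrt qn * η := by
        have h1 : Real.sqrt (1/(qn:ℝ)) = Real.sqrt qn / qn := by
          rw [show (1:ℝ)/(qn:ℝ) = (qn:ℝ)/((qn:ℝ)^2) by field_simp [sq],
            Real.sqrt_div hq0'.le, Real.sqrt_sq hq0'.le]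
        rw [h1]
        field_simp
      calc ∑ y, Real.sqrt (W x y * v y)
          ≤ ∑ y, ∑ x' ∈ Cc, Real.sqrt (1/(qn:ℝ)) * Real.sqrt (W x y * W x' y) :=
            Finset.sum_le_sum fun y _ => hpery y
        _ = Real.sqrt (1/(qn:ℝ)) * ∑ x' ∈ Cc, Zpair W x x' := by
            rw [Finset.sum_comm, Finset.mul_sum]
            refine Finset.sum_congr rfl fun x' _ => ?_
            unfold Zpair
            rw [Finset.mul_sum]
        _ ≤ Real.sqrt (1/(qn:ℝ)) * ((qn:ℝ)*η) :=
            mul_le_mul_of_nonneg_left hZsum (Real.sqrt_nonneg _)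
        _ = _ := hkey
    have hTle : ∑ y, Real.sqrt (W x y * Qf y) ≤ c + Real.sqrt qn * η := by
      have hpery : ∀ y, Real.sqrt (W x y * Qf y)
          ≤ Real.sqrt (W x y * u y) + Real.sqrt (W x y * v y) := by
        intro y
        rw [hQfsplit y, mul_add]
        exact sqrt_add_le' _ _ (mul_nonneg (hW0 x y) (hu0 y))
          (mul_nonneg (hW0 x y) (hv0 y))
      calc ∑ y, Real.sqrt (W x y * Qf y)
          ≤ ∑ y, (Real.sqrt (W x y * u y) + Real.sqrt (W x y * v y)) :=
            Finset.sum_le_sum fun y _ => hpery y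
        _ = (∑ y, Real.sqrt (W x y * u y)) + ∑ y, Real.sqrt (W x y * v y) :=
            Finset.sum_add_distrib
        _ ≤ _ := add_le_add hTu hTv
    have hT0 : 0 < ∑ y, Real.sqrt (W x y * Qf y) := by
      obtain ⟨y0, hy0⟩ : ∃ y, W x y ≠ 0 := by
        by_contra h
        push_neg at h
        have h1 := hW1 x
        rw [Finset.sum_eq_zero (fun y _ => h y)] at h1
        norm_num at h1
      refine Finset.sum_pos' (fun y _ => Real.sqrt_nonneg _) ⟨y0, Finset.mem_univ y0, ?_⟩
      have hw : 0 < W x y0 := (hW0 x y0).lt_of_ne (Ne.symm hy0)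
      have hqf := lt_of_lt_of_le (mul_pos (by positivity : (0:ℝ) < 1/(qn:ℝ)) hw) (hQfW x y0)
      exact Real.sqrt_pos.mpr (mul_pos hw hqf)
    have hlogT : Real.logb 2 (∑ y, Real.sqrt (W x y * Qf y))
        ≤ Real.logb 2 (c + Real.sqrt qn * η) :=
      Real.logb_le_logb_of_le (by norm_num) hT0 hTle
    linarith [hlogT]
  -- assemble
  have hcap_ub : symCap W ≤ Real.logb 2 ((qn:ℝ)/sn) + (sn:ℝ)/Real.log 2 * (2 * Real.sqrt (2*η)) := by
    rw [hsymCap]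
    calc ∑ x : G, (1/(qn:ℝ)) * ∑ y, W x y * Real.logb 2 (W x y / Qf y)
        ≤ ∑ _x : G, (1/(qn:ℝ)) * (Real.logb 2 ((qn:ℝ)/sn) + (sn:ℝ)/Real.log 2 * (2 * Real.sqrt (2*η))) :=
          Finset.sum_le_sum fun x _ => mul_le_mul_of_nonneg_left (hUB x) (by positivity)
      _ = Real.logb 2 ((qn:ℝ)/sn) + (sn:ℝ)/Real.log 2 * (2 * Real.sqrt (2*η)) := by
          rw [Finset.sum_const, Finset.card_univ, ← hqdef, nsmul_eq_mul]
          field_simp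
  have hcap_lb : -2 * Real.logb 2 (c + Real.sqrt qn * η) ≤ symCap W := by
    rw [hsymCap]
    calc (-2 * Real.logb 2 (c + Real.sqrt qn * η))
        = ∑ _x : G, (1/(qn:ℝ)) * (-2 * Real.logb 2 (c + Real.sqrt qn * η)) := by
          rw [Finset.sum_const, Finset.card_univ, ← hqdef, nsmul_eq_mul]
          field_simp
      _ ≤ ∑ x : G, (1/(qn:ℝ)) * ∑ y, W x y * Real.logb 2 (W x y / Qf y) :=
          Finset.sum_le_sum fun x _ => mul_le_mul_of_nonneg_left (hLB x) (by positivity)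
  -- numeric bound 1
  have hnum1 : (sn:ℝ)/Real.log 2 * (2 * Real.sqrt (2*η)) < δ := by
    have hsq2 : Real.sqrt (2*η) ^ 2 = 2*η := Real.sq_sqrt (by positivity)
    have hXsq : ((sn:ℝ)/Real.log 2 * (2 * Real.sqrt (2*η)))^2 ≤ δ^2/2 := by
      have he : ((sn:ℝ)/Real.log 2 * (2 * Real.sqrt (2*η)))^2
          = (sn:ℝ)^2/(Real.log 2)^2 * 4 * (2*η) := by
        rw [mul_pow, mul_pow, hsq2]; ring
      rw [he]
      calc (sn:ℝ)^2/(Real.log 2)^2 * 4 * (2*η)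
          ≤ (sn:ℝ)^2/(Real.log 2)^2 * 4 * m₁ :=
            mul_le_mul_of_nonneg_left hηm₁ (by positivity)
        _ = δ^2/2 := by rw [hm₁def]; field_simp; ring
    nlinarith [Real.sqrt_nonneg (2*η), mul_nonneg (le_of_lt (div_pos hs0' hl2))
      (by positivity : (0:ℝ) ≤ 2 * Real.sqrt (2*η)), hδ]
  -- numeric bound 2
  have hnum2 : Real.logb 2 ((qn:ℝ)/sn) - δ < -2 * Real.logb 2 (c + Real.sqrt qn * η) := by
    have hlt : c + Real.sqrt qn * η < c * (2:ℝ) ^ (δ/2) := by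
      have h1 : Real.sqrt qn * η < Real.sqrt qn * m₂ :=
        (mul_lt_mul_iff_right₀ hsqrtq).mpr hηm₂
      have h2 : Real.sqrt qn * m₂ = c * ((2:ℝ) ^ (δ/2) - 1) := by
        rw [hm₂def]; field_simp
      nlinarith
    have hlogb : Real.logb 2 (c + Real.sqrt qn * η) < Real.logb 2 c + δ/2 := by
      have h := Real.logb_lt_logb (b := 2) (by norm_num)
        (by positivity : (0:ℝ) < c + Real.sqrt qn * η) hlt
      rwa [Real.logb_mul hc0.ne' (ne_of_gt (Real.rpow_pos_of_pos two_pos _)),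
        Real.logb_rpow (by norm_num) (by norm_num)] at h
    have hLval : Real.logb 2 ((qn:ℝ)/sn) = -2 * Real.logb 2 c := by
      have hc2 : c^2 = (sn:ℝ)/qn := by
        rw [hcdef]; exact Real.sq_sqrt (by positivity)
      have h1 : Real.logb 2 ((sn:ℝ)/qn) = 2 * Real.logb 2 c := by
        rw [← hc2, Real.logb_pow]; norm_num
      have h2 : ((qn:ℝ)/sn) = ((sn:ℝ)/qn)⁻¹ := by rw [inv_div]
      rw [h2, Real.logb_inv, h1]; ring
    linarith
  rw [abs_lt]
  constructor <;> [linarith [hcap_lb, hnum2]; linarith [hcap_ub, hnum1]]
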